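/- Assume each agent is eligible for at most one preferential category and all categories' priorities are consistent with the baseline ordering. Then the outcome of the over-and-above rule (i) complies with the eligibility requirements, (ii) is a maximum beneficiary assignment, (iii) respects priorities, (iv) is non-wasteful, and (v) is order preserving for q_{c_u^1} = q_{c_u} and q_{c_u^2} = 0. -/

import Mathlib

open scoped Classical

/-- An instance of the rationing problem: a quota for every category and, for every
category `c`, a priority ranking `≿_c`: a total preorder on `N ∪ {∅}`, where we model
`N ∪ {∅}` as `Option N` with `none` playing the role of `∅`. -/
structure Inst (N C : Type*) where
  quota : C → ℕ
  prio : C → Option N → Option N → Prop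
  total : ∀ c x y, prio c x y ∨ prio c y x
  trans : ∀ c x y z, prio c x y → prio c y z → prio c x z

namespace Inst

variable {N C : Type*}

/-- The strict part `≻_c` of the priority ranking `≿_c`. -/
def Strict (I : Inst N C) (c : C) (x y : Option N) : Prop :=
  I.prio c x y ∧ ¬ I.prio c y x

/-- Agent `i` is eligible for category `c` if `i ≻_c ∅`. -/
def Eligible (I : Inst N C) (i : N) (c : C) : Prop :=
  I.Strict c (some i) none

end Inst

variable {N C : Type*} [Fintype N] [DecidableEq N] [DecidableEq C]

/-- The number of matched agents of (the function) `μ`. -/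
def msize (μ : N → Option C) : ℕ :=
  (Finset.univ.filter fun i => μ i ≠ none).card

/-- `μ` satisfies the capacity constraints: every category `c` is matched
to at most `quota c` agents. -/
def Inst.IsMatching (I : Inst N C) (μ : N → Option C) : Prop :=
  ∀ c, (Finset.univ.filter fun i => μ i = some c).card ≤ I.quota c

/-- A baseline ordering `≻_π`, given as a duplicate-free list of all agents,
listed from highest priority to lowest priority; so `i ≻_π j` iff
`order.idxOf i < order.idxOf j`. -/
def IsBaseline (order : List N) : Prop :=
  order.Nodup ∧ ∀ i : N, i ∈ order

/-- `μ` complies with the eligibility requirements. -/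
def Complies (I : Inst N C) (μ : N → Option C) : Prop :=
  ∀ (i : N) (c : C), μ i = some c → I.Eligible i c

/-- `μ` respects priorities: no unmatched agent has strictly higher priority for some
category than an agent matched to it. -/
def RespectsPriorities (I : Inst N C) (μ : N → Option C) : Prop :=
  ¬ ∃ (i j : N) (c : C), μ i = some c ∧ μ j = none ∧ I.Strict c (some j) (some i)

/-- The number of agents matched to category `c` by `μ`. -/
def catCount (μ : N → Option C) (c : C) : ℕ :=
  (Finset.univ.filter fun i => μ i = some c).card

/-- `μ` is non-wasteful: an eligible agent is only left unmatched if all units of the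
category are used. -/
def NonWasteful (I : Inst N C) (μ : N → Option C) : Prop :=
  ∀ (i : N) (c : C), I.Eligible i c → μ i = none → catCount μ c = I.quota c

/-- The number of agents matched to a preferential category (a category other than the
unreserved category `cu`). -/
def beneCount (cu : C) (μ : N → Option C) : ℕ :=
  (Finset.univ.filter fun i => μ i ≠ none ∧ μ i ≠ some cu).card

/-- `μ` is a maximum beneficiary assignment: it maximizes the number of agents matched to
preferential categories among all matchings complying with the eligibility requirements. -/
def MaxBene (I : Inst N C) (cu : C) (μ : N → Option C) : Prop :=
  ∀ ν : N → Option C, I.IsMatching ν → Complies I ν → beneCount cu ν ≤ beneCount cu μ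

/-- The priorities are consistent with the baseline ordering: for each category the
eligible agents are ranked according to `≻_π`. -/
def Consistent (I : Inst N C) (order : List N) : Prop :=
  ∀ (c : C) (i j : N), I.Eligible i c → I.Eligible j c →
    (I.Strict c (some i) (some j) ↔ order.idxOf i < order.idxOf j)

/-- Each agent is eligible for at most one preferential category. -/
def OneCategory (I : Inst N C) (cu : C) : Prop :=
  ∀ (i : N) (c c' : C), c ≠ cu → c' ≠ cu → I.Eligible i c → I.Eligible i c' → c = c'

/-- One step of the minimum-guarantees rule: the considered agent is matched to a
preferential category she is eligible for if a unit of it remains, and otherwise to the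
unreserved category if an unreserved unit remains. -/
noncomputable def mgStep (I : Inst N C) (cu : C) (μ : N → Option C) (i : N) : N → Option C :=
  if h : ∃ c, c ≠ cu ∧ I.Eligible i c ∧ catCount μ c < I.quota c then
    Function.update μ i (some h.choose)
  else if catCount μ cu < I.quota cu then Function.update μ i (some cu)
  else μ

/-- The outcome of the minimum-guarantees rule: the agents are considered in order of the
baseline ordering from highest to lowest priority. -/
noncomputable def mgOutcome (I : Inst N C) (cu : C) (order : List N) : N → Option C :=
  order.foldl (mgStep I cu) fun _ => none

/-- Order preservation for `q_{c_u^1} = 0` and `q_{c_u^2} = q_{c_u}` (the unreserved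
category `cu` plays the role of `c_u^2`, and no agent is matched to `c_u^1`, so clause (i)
is vacuous): if `μ(j) ∈ C_p`, `i ≻_{μ(j)} j`, and `i` is eligible for `μ(j)`, then
`μ(i) ≠ c_u^2 = cu`. -/
def OrderPreservingMG (I : Inst N C) (cu : C) (μ : N → Option C) : Prop :=
  ∀ (i j : N) (ci cj : C), μ i = some ci → μ j = some cj → cj ≠ cu →
    I.Strict cj (some i) (some j) → I.Eligible i cj → ci ≠ cu

/-- One step of the first phase of the over-and-above rule: the considered agent `i` is
matched to the unreserved category only if an unreserved unit remains and, for any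
preferential category `c` that `i` is eligible for, at least `q_c` agents of `N_c` other
than `i` are still unmatched. -/
noncomputable def oaStep (I : Inst N C) (cu : C) (σ : N → Option C) (i : N) : N → Option C :=
  if catCount σ cu < I.quota cu ∧
      ∀ c : C, c ≠ cu → I.Eligible i c →
        I.quota c ≤ (Finset.univ.filter fun j => j ≠ i ∧ I.Eligible j c ∧ σ j = none).card then
    Function.update σ i (some cu)
  else σ

/-- The first phase of the over-and-above rule (allocation of the unreserved units),
considering the agents in order of the baseline ordering from highest to lowest priority. -/
noncomputable def oaPhase1 (I : Inst N C) (cu : C) (order : List N) : N → Option C :=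
  order.foldl (oaStep I cu) fun _ => none

/-- The outcome of the over-and-above rule: after the first phase, each preferential
category `c` is filled with the `min {q_c, |N_c|}` highest (baseline) priority agents of
`N_c` who are still unmatched. -/
noncomputable def oaOutcome (I : Inst N C) (cu : C) (order : List N) : N → Option C :=
  fun i =>
    if oaPhase1 I cu order i = some cu then some cu
    else if h : ∃ c, c ≠ cu ∧ I.Eligible i c ∧
        (Finset.univ.filter fun j => I.Eligible j c ∧ oaPhase1 I cu order j = none ∧
          order.idxOf j < order.idxOf i).card < I.quota c then
      some h.choose
    else none

/-- Order preservation for `q_{c_u^1} = q_{c_u}` and `q_{c_u^2} = 0` (the unreserved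
category `cu` plays the role of `c_u^1`, and no agent is matched to `c_u^2`, so clause (ii)
is vacuous): if `μ(i) ∈ C_p`, `i ≻_{μ(j)} j`, and `j` is eligible for `μ(i)`, then
`μ(j) ≠ c_u^1 = cu`. -/
def OrderPreservingOA (I : Inst N C) (cu : C) (μ : N → Option C) : Prop :=
  ∀ (i j : N) (ci cj : C), μ i = some ci → μ j = some cj → ci ≠ cu →
    I.Strict cj (some i) (some j) → I.Eligible j ci → cj ≠ cu


/-! ### Auxiliary development for the over-and-above rule -/

section OAAux
set_option linter.unusedSectionVars false

variable (I : Inst N C) (cu : C) (order : List N)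

/-- The guard condition of `oaStep`. -/
abbrev OAGuard (σ : N → Option C) (i : N) : Prop :=
  catCount σ cu < I.quota cu ∧
    ∀ c : C, c ≠ cu → I.Eligible i c →
      I.quota c ≤ (Finset.univ.filter fun j => j ≠ i ∧ I.Eligible j c ∧ σ j = none).card

lemma oaStep_pos {σ : N → Option C} {i : N} (h : OAGuard I cu σ i) :
    oaStep I cu σ i = Function.update σ i (some cu) := if_pos h

lemma oaStep_neg {σ : N → Option C} {i : N} (h : ¬ OAGuard I cu σ i) :
    oaStep I cu σ i = σ := if_neg h

lemma oaStep_apply_ne {σ : N → Option C} {i j : N} (h : j ≠ i) :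
    oaStep I cu σ i j = σ j := by
  by_cases hg : OAGuard I cu σ i
  · rw [oaStep_pos I cu hg, Function.update_of_ne h]
  · rw [oaStep_neg I cu hg]

lemma oa_foldl_not_mem {l : List N} {σ : N → Option C} {j : N} (h : j ∉ l) :
    l.foldl (oaStep I cu) σ j = σ j := by
  induction l generalizing σ with
  | nil => rfl
  | cons a l ih =>
    simp only [List.mem_cons, not_or] at h
    simp only [List.foldl_cons]
    rw [ih h.2, oaStep_apply_ne I cu h.1]

lemma oaStep_some_cu {σ : N → Option C} {j : N} (i : N) (h : σ j = some cu) :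
    oaStep I cu σ i j = some cu := by
  by_cases hg : OAGuard I cu σ i
  · rw [oaStep_pos I cu hg]
    rcases eq_or_ne j i with rfl | hne
    · simp
    · rwa [Function.update_of_ne hne]
  · rwa [oaStep_neg I cu hg]

lemma oa_foldl_some_cu {l : List N} {σ : N → Option C} {j : N} (h : σ j = some cu) :
    l.foldl (oaStep I cu) σ j = some cu := by
  induction l generalizing σ with
  | nil => exact h
  | cons a l ih => exact ih (oaStep_some_cu I cu a h)

lemma oa_foldl_none_or_cu {l : List N} {σ : N → Option C}
    (h : ∀ j, σ j = none ∨ σ j = some cu) (j : N) :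
    l.foldl (oaStep I cu) σ j = none ∨ l.foldl (oaStep I cu) σ j = some cu := by
  induction l generalizing σ with
  | nil => exact h j
  | cons a l ih =>
    refine ih fun k => ?_
    by_cases hg : OAGuard I cu σ a
    · rw [oaStep_pos I cu hg]
      rcases eq_or_ne k a with rfl | hne
      · right; simp
      · rw [Function.update_of_ne hne]; exact h k
    · rw [oaStep_neg I cu hg]; exact h k

lemma catCount_le_foldl (l : List N) (σ : N → Option C) :
    catCount σ cu ≤ catCount (l.foldl (oaStep I cu) σ) cu := by
  unfold catCount
  apply Finset.card_le_card
  intro k hk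
  simp only [Finset.mem_filter, Finset.mem_univ, true_and] at hk ⊢
  exact oa_foldl_some_cu I cu hk

lemma catCount_step_le {σ : N → Option C} (i : N) (h : catCount σ cu ≤ I.quota cu) :
    catCount (oaStep I cu σ i) cu ≤ I.quota cu := by
  by_cases hg : OAGuard I cu σ i
  · rw [oaStep_pos I cu hg]
    have hsub : (Finset.univ.filter fun k => Function.update σ i (some cu) k = some cu)
        ⊆ insert i (Finset.univ.filter fun k => σ k = some cu) := by
      intro k hk
      simp only [Finset.mem_filter, Finset.mem_univ, true_and] at hk
      rcases eq_or_ne k i with rfl | hne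
      · exact Finset.mem_insert_self _ _
      · rw [Function.update_of_ne hne] at hk
        exact Finset.mem_insert_of_mem (by simp [hk])
    calc catCount (Function.update σ i (some cu)) cu
        ≤ (insert i (Finset.univ.filter fun k => σ k = some cu)).card :=
          Finset.card_le_card hsub
      _ ≤ catCount σ cu + 1 := Finset.card_insert_le _ _
      _ ≤ I.quota cu := hg.1
  · rwa [oaStep_neg I cu hg]

lemma catCount_foldl_le (l : List N) (σ : N → Option C) (h : catCount σ cu ≤ I.quota cu) :
    catCount (l.foldl (oaStep I cu) σ) cu ≤ I.quota cu := by
  induction l generalizing σ with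
  | nil => exact h
  | cons a l ih => exact ih _ (catCount_step_le I cu a h)

/-- The set of agents eligible for `c` and unmatched under `σ`. -/
noncomputable def availF (σ : N → Option C) (c : C) : Finset N :=
  Finset.univ.filter fun j => I.Eligible j c ∧ σ j = none

lemma avail_step_min {σ : N → Option C} (i : N) {c : C} (hc : c ≠ cu)
    (h : min (I.quota c) (Finset.univ.filter fun j => I.Eligible j c).card
      ≤ (availF I σ c).card) :
    min (I.quota c) (Finset.univ.filter fun j => I.Eligible j c).card
      ≤ (availF I (oaStep I cu σ i) c).card := by
  by_cases hg : OAGuard I cu σ i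
  · rw [oaStep_pos I cu hg]
    by_cases he : I.Eligible i c
    · have hq := hg.2 c hc he
      have hset : (Finset.univ.filter fun j => j ≠ i ∧ I.Eligible j c ∧ σ j = none)
          = availF I (Function.update σ i (some cu)) c := by
        ext j
        rcases eq_or_ne j i with rfl | hne
        · simp [availF]
        · simp [availF, hne, Function.update_of_ne hne]
      rw [hset] at hq
      exact le_trans (min_le_left _ _) hq
    · have hset : availF I (Function.update σ i (some cu)) c = availF I σ c := by
        ext j
        rcases eq_or_ne j i with rfl | hne
        · simp [availF, he]
        · simp [availF, Function.update_of_ne hne]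
      rwa [hset]
  · rwa [oaStep_neg I cu hg]

lemma avail_foldl_min (l : List N) (σ : N → Option C) {c : C} (hc : c ≠ cu)
    (h : min (I.quota c) (Finset.univ.filter fun j => I.Eligible j c).card
      ≤ (availF I σ c).card) :
    min (I.quota c) (Finset.univ.filter fun j => I.Eligible j c).card
      ≤ (availF I (l.foldl (oaStep I cu) σ) c).card := by
  induction l generalizing σ with
  | nil => exact h
  | cons a l ih => exact ih _ (avail_step_min I cu a hc h)

lemma mem_take_iff (hb : IsBaseline order) (k : N) (n : ℕ) :
    k ∈ order.take n ↔ order.idxOf k < n := by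
  have hlen : order.idxOf k < order.length := List.idxOf_lt_length_iff.2 (hb.2 k)
  constructor
  · intro hk
    obtain ⟨m, hm, hgm⟩ := List.mem_iff_getElem.1 hk
    have hm' : m < order.length := lt_of_lt_of_le hm (by simp [List.length_take])
    have hmn : m < n := lt_of_lt_of_le hm (by simp [List.length_take])
    have hget : order[m] = k := by rw [← List.getElem_take (xs := order) (j := n)]; exact hgm
    have : order[m] = order[order.idxOf k] := by
      rw [hget, List.getElem_idxOf hlen]
    have := (List.Nodup.getElem_inj_iff hb.1).1 this
    omega
  · intro hlt
    have hmin : order.idxOf k < (order.take n).length := by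
      simp [List.length_take]; omega
    have : (order.take n)[order.idxOf k] = k := by
      rw [List.getElem_take]; exact List.getElem_idxOf hlen
    exact this ▸ List.getElem_mem _

lemma not_mem_drop (hb : IsBaseline order) {k : N} {n : ℕ} (h : order.idxOf k < n) :
    k ∉ order.drop n := by
  intro hk
  have h1 : k ∈ order.take n := (mem_take_iff order hb k n).2 h
  have := List.nodup_append.1 ((List.take_append_drop n order).symm ▸ hb.1)
  exact this.2.2 k h1 k hk rfl

/-- The state of the first phase just before agent `j` is considered. -/
noncomputable def sigAt (j : N) : N → Option C :=
  (order.take (order.idxOf j)).foldl (oaStep I cu) (fun _ => none)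

lemma sigAt_none_or_cu (j k : N) : sigAt I cu order j k = none ∨ sigAt I cu order j k = some cu :=
  oa_foldl_none_or_cu I cu (fun _ => Or.inl rfl) k

lemma phase1_none_or_cu (k : N) :
    oaPhase1 I cu order k = none ∨ oaPhase1 I cu order k = some cu :=
  oa_foldl_none_or_cu I cu (fun _ => Or.inl rfl) k

lemma phase1_decomp (j : N) :
    oaPhase1 I cu order =
      (order.drop (order.idxOf j)).foldl (oaStep I cu) (sigAt I cu order j) := by
  rw [oaPhase1, sigAt, ← List.foldl_append, List.take_append_drop]

lemma drop_indexOf (hb : IsBaseline order) (j : N) :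
    order.drop (order.idxOf j) = j :: order.drop (order.idxOf j + 1) := by
  have hlen : order.idxOf j < order.length := List.idxOf_lt_length_iff.2 (hb.2 j)
  rw [List.drop_eq_getElem_cons hlen, List.getElem_idxOf hlen]

lemma sigAt_self (hb : IsBaseline order) (j : N) : sigAt I cu order j j = none := by
  rw [sigAt, oa_foldl_not_mem]
  intro hj
  exact lt_irrefl _ ((mem_take_iff order hb j _).1 hj)

lemma phase1_apply (hb : IsBaseline order) (j : N) :
    oaPhase1 I cu order j = oaStep I cu (sigAt I cu order j) j j := by
  rw [phase1_decomp I cu order j, drop_indexOf order hb j, List.foldl_cons,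
    oa_foldl_not_mem]
  exact not_mem_drop order hb (Nat.lt_succ_self _)

lemma phase1_eq_some_iff (hb : IsBaseline order) (j : N) :
    oaPhase1 I cu order j = some cu ↔ OAGuard I cu (sigAt I cu order j) j := by
  rw [phase1_apply I cu order hb j]
  by_cases hg : OAGuard I cu (sigAt I cu order j) j
  · rw [oaStep_pos I cu hg]
    exact iff_of_true (by simp) hg
  · rw [oaStep_neg I cu hg, sigAt_self I cu order hb j]
    exact iff_of_false (by simp) hg

lemma phase1_eq_none_iff (hb : IsBaseline order) (j : N) :
    oaPhase1 I cu order j = none ↔ ¬ OAGuard I cu (sigAt I cu order j) j := by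
  rw [phase1_apply I cu order hb j]
  by_cases hg : OAGuard I cu (sigAt I cu order j) j
  · rw [oaStep_pos I cu hg]
    exact iff_of_false (by simp) (not_not_intro hg)
  · rw [oaStep_neg I cu hg, sigAt_self I cu order hb j]
    exact iff_of_true rfl hg

lemma sigAt_frozen (hb : IsBaseline order) {k j : N} (h : order.idxOf k < order.idxOf j) :
    sigAt I cu order j k = oaPhase1 I cu order k := by
  rw [phase1_decomp I cu order j, oa_foldl_not_mem]
  exact not_mem_drop order hb h

lemma sigAt_unprocessed (hb : IsBaseline order) {k j : N}
    (h : ¬ order.idxOf k < order.idxOf j) : sigAt I cu order j k = none := by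
  rw [sigAt, oa_foldl_not_mem]
  intro hk
  exact h ((mem_take_iff order hb k _).1 hk)

lemma sigAt_middle {j i : N} (h : order.idxOf j ≤ order.idxOf i) :
    sigAt I cu order i =
      ((order.take (order.idxOf i)).drop (order.idxOf j)).foldl (oaStep I cu)
        (sigAt I cu order j) := by
  conv_lhs => rw [sigAt, ← List.take_append_drop (order.idxOf j) (order.take (order.idxOf i))]
  rw [List.foldl_append, List.take_take, min_eq_left h, sigAt]

lemma sigAt_catCount_mono {j i : N} (h : order.idxOf j ≤ order.idxOf i) :
    catCount (sigAt I cu order j) cu ≤ catCount (sigAt I cu order i) cu := by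
  rw [sigAt_middle I cu order h]
  exact catCount_le_foldl I cu _ _

lemma sigAt_none_mono {j i : N} (h : order.idxOf j ≤ order.idxOf i) {k : N}
    (hk : sigAt I cu order i k = none) : sigAt I cu order j k = none := by
  rcases sigAt_none_or_cu I cu order j k with h' | h'
  · exact h'
  · exfalso
    rw [sigAt_middle I cu order h] at hk
    rw [oa_foldl_some_cu I cu h'] at hk
    exact (Option.some_ne_none _ hk).elim

lemma phase1_catCount_ge (i : N) :
    catCount (sigAt I cu order i) cu ≤ catCount (oaPhase1 I cu order) cu := by
  rw [phase1_decomp I cu order i]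
  exact catCount_le_foldl I cu _ _

lemma elig_of_strict {c : C} {i j : N} (hs : I.Strict c (some j) (some i))
    (he : I.Eligible i c) : I.Eligible j c := by
  obtain ⟨h1, h2⟩ := hs
  obtain ⟨h3, h4⟩ := he
  exact ⟨I.trans c _ _ _ h1 h3, fun hn => h4 (I.trans c _ _ _ hn h1)⟩

/-- The set of agents eligible for `c` left unmatched by the first phase. -/
noncomputable def AcF (c : C) : Finset N := availF I (oaPhase1 I cu order) c

/-- The number of agents eligible for `c`, unmatched after phase one, and with higher
baseline priority than `i`. -/
noncomputable def cnt (i : N) (c : C) : ℕ :=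
  (Finset.univ.filter fun j => I.Eligible j c ∧ oaPhase1 I cu order j = none ∧
    order.idxOf j < order.idxOf i).card

lemma cnt_eq_Ac (i : N) (c : C) :
    cnt I cu order i c
      = ((AcF I cu order c).filter fun j => order.idxOf j < order.idxOf i).card := by
  rw [cnt, AcF, availF, Finset.filter_filter]
  congr 1
  ext j
  simp [and_assoc]

lemma outcome_eq_cu_iff (i : N) :
    oaOutcome I cu order i = some cu ↔ oaPhase1 I cu order i = some cu := by
  by_cases h1 : oaPhase1 I cu order i = some cu
  · simp [oaOutcome, h1]
  · simp only [oaOutcome, if_neg h1]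
    constructor
    · intro h
      split at h
      · next hP => exact absurd (Option.some.inj h) hP.choose_spec.1
      · exact absurd h (by simp)
    · intro h
      exact absurd h h1

lemma outcome_some_iff (hone : OneCategory I cu) {i : N} {c : C} (hc : c ≠ cu) :
    oaOutcome I cu order i = some c ↔
      I.Eligible i c ∧ oaPhase1 I cu order i = none ∧ cnt I cu order i c < I.quota c := by
  constructor
  · intro h
    have h1 : oaPhase1 I cu order i ≠ some cu := by
      intro hh
      rw [(outcome_eq_cu_iff I cu order i).2 hh] at h
      exact hc (Option.some.inj h).symm
    have h1' : oaPhase1 I cu order i = none := (phase1_none_or_cu I cu order i).resolve_right h1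
    simp only [oaOutcome, if_neg h1] at h
    split at h
    · next hP =>
      have hcc := Option.some.inj h
      obtain ⟨hne, helig, hcard⟩ := hP.choose_spec
      rw [hcc] at helig hcard
      exact ⟨helig, h1', hcard⟩
    · exact absurd h (by simp)
  · rintro ⟨he, h1, hcnt⟩
    have hP : ∃ c', c' ≠ cu ∧ I.Eligible i c' ∧
        (Finset.univ.filter fun j => I.Eligible j c' ∧ oaPhase1 I cu order j = none ∧
          order.idxOf j < order.idxOf i).card < I.quota c' := ⟨c, hc, he, hcnt⟩
    have h1' : ¬ oaPhase1 I cu order i = some cu := by simp [h1]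
    simp only [oaOutcome, if_neg h1', dif_pos hP]
    exact congrArg some (hone i _ c hP.choose_spec.1 hc hP.choose_spec.2.1 he)

lemma outcome_none_iff {i : N} :
    oaOutcome I cu order i = none ↔ oaPhase1 I cu order i = none ∧
      ∀ c, c ≠ cu → I.Eligible i c → I.quota c ≤ cnt I cu order i c := by
  by_cases h1 : oaPhase1 I cu order i = some cu
  · simp [oaOutcome, h1]
  · have h1' : oaPhase1 I cu order i = none := (phase1_none_or_cu I cu order i).resolve_right h1
    constructor
    · intro h
      refine ⟨h1', fun c hc he => ?_⟩
      by_contra hq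
      have hP : ∃ c', c' ≠ cu ∧ I.Eligible i c' ∧
          (Finset.univ.filter fun j => I.Eligible j c' ∧ oaPhase1 I cu order j = none ∧
            order.idxOf j < order.idxOf i).card < I.quota c' := ⟨c, hc, he, not_le.1 hq⟩
      simp only [oaOutcome, if_neg h1, dif_pos hP] at h
      exact (Option.some_ne_none _ h).elim
    · rintro ⟨-, h⟩
      have hP : ¬ ∃ c', c' ≠ cu ∧ I.Eligible i c' ∧
          (Finset.univ.filter fun j => I.Eligible j c' ∧ oaPhase1 I cu order j = none ∧
            order.idxOf j < order.idxOf i).card < I.quota c' := by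
        rintro ⟨c', hc', he', hlt⟩
        exact absurd hlt (not_lt.2 (h c' hc' he'))
      simp only [oaOutcome, if_neg h1, dif_neg hP]

lemma card_rank_lt (A : Finset N) (g : N → ℕ) (hg : Set.InjOn g ↑A) (q : ℕ) (f : N → ℕ)
    (hfdef : ∀ a, f a = (A.filter fun b => g b < g a).card) :
    (A.filter fun a => f a < q).card = min q A.card := by
  have hmono : ∀ a ∈ A, ∀ a' ∈ A, g a < g a' → f a < f a' := by
    intro a ha a' ha' hlt
    have hsub : insert a (A.filter fun b => g b < g a) ⊆ A.filter fun b => g b < g a' := by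
      intro x hx
      rcases Finset.mem_insert.1 hx with rfl | hx
      · exact Finset.mem_filter.2 ⟨ha, hlt⟩
      · have hx' := Finset.mem_filter.1 hx
        exact Finset.mem_filter.2 ⟨hx'.1, lt_trans hx'.2 hlt⟩
    have hnotmem : a ∉ A.filter fun b => g b < g a := by simp
    calc f a < f a + 1 := Nat.lt_succ_self _
      _ = (insert a (A.filter fun b => g b < g a)).card := by
          rw [Finset.card_insert_of_notMem hnotmem, hfdef]
      _ ≤ (A.filter fun b => g b < g a').card := Finset.card_le_card hsub
      _ = f a' := (hfdef a').symm
  have hinj : Set.InjOn f ↑A := by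
    intro a ha a' ha' hfe
    by_contra hne
    rcases lt_or_gt_of_ne (fun h : g a = g a' => hne (hg ha ha' h)) with h | h
    · exact absurd hfe (Nat.ne_of_lt (hmono a ha a' ha' h))
    · exact absurd hfe.symm (Nat.ne_of_lt (hmono a' ha' a ha h))
  have hflt : ∀ a ∈ A, f a < A.card := by
    intro a ha
    rw [hfdef]
    refine Finset.card_lt_card ⟨Finset.filter_subset _ _, fun hsub => ?_⟩
    have := hsub ha
    simp at this
  have himg : A.image f = Finset.range A.card := by
    apply Finset.eq_of_subset_of_card_le
    · intro x hx
      obtain ⟨a, ha, rfl⟩ := Finset.mem_image.1 hx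
      exact Finset.mem_range.2 (hflt a ha)
    · rw [Finset.card_image_of_injOn hinj, Finset.card_range]
  have hkey : ((A.filter fun a => f a < q).image f).card = (A.filter fun a => f a < q).card := by
    apply Finset.card_image_of_injOn
    exact hinj.mono (by exact_mod_cast Finset.filter_subset _ _)
  have himg2 : (A.filter fun a => f a < q).image f
      = (Finset.range A.card).filter (fun x => x < q) := by
    rw [← himg, Finset.filter_image]
  have hrange : (Finset.range A.card).filter (fun x => x < q) = Finset.range (min q A.card) := by
    ext x
    simp only [Finset.mem_filter, Finset.mem_range, Nat.lt_min]
    exact and_comm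
  rw [← hkey, himg2, hrange, Finset.card_range]

lemma idx_injOn (hb : IsBaseline order) (A : Finset N) :
    Set.InjOn (fun k => order.idxOf k) ↑A :=
  fun x _ y _ h => (List.idxOf_inj (hb.2 x)).1 h

lemma catCount_outcome (hb : IsBaseline order) (hone : OneCategory I cu) {c : C} (hc : c ≠ cu) :
    catCount (oaOutcome I cu order) c = min (I.quota c) (AcF I cu order c).card := by
  have hset : (Finset.univ.filter fun i => oaOutcome I cu order i = some c)
      = (AcF I cu order c).filter fun i =>
          (((AcF I cu order c).filter fun j => order.idxOf j < order.idxOf i).card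
            < I.quota c) := by
    ext i
    simp only [Finset.mem_filter]
    simp only [Finset.mem_filter, Finset.mem_univ, true_and, AcF, availF,
      outcome_some_iff I cu order hone hc, cnt_eq_Ac I cu order i c, AcF, availF]
    tauto
  rw [catCount, hset]
  exact card_rank_lt (AcF I cu order c) (fun k => order.idxOf k) (idx_injOn order hb _)
    (I.quota c)
    (fun i => ((AcF I cu order c).filter fun j => order.idxOf j < order.idxOf i).card)
    (fun a => rfl)

lemma beneCount_eq_sum (μ : N → Option C) (T : Finset C) (hcu : cu ∉ T)
    (hT : ∀ i c, μ i = some c → c ≠ cu → c ∈ T) :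
    beneCount cu μ = ∑ c ∈ T, catCount μ c := by
  have hdisj : ∀ c ∈ T, ∀ c' ∈ T, c ≠ c' →
      Disjoint (Finset.univ.filter fun i => μ i = some c)
        (Finset.univ.filter fun i => μ i = some c') := by
    intro c _ c' _ hne
    rw [Finset.disjoint_left]
    intro i h1 h2
    simp only [Finset.mem_filter] at h1 h2
    rw [h1.2] at h2
    exact hne (Option.some.inj h2.2)
  have hset : (Finset.univ.filter fun i => μ i ≠ none ∧ μ i ≠ some cu)
      = T.biUnion (fun c => Finset.univ.filter fun i => μ i = some c) := by
    ext i
    simp only [Finset.mem_filter, Finset.mem_univ, true_and, Finset.mem_biUnion]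
    constructor
    · rintro ⟨h1, h2⟩
      cases hμ : μ i with
      | none => exact absurd hμ h1
      | some c =>
        have hc : c ≠ cu := fun h => h2 (by rw [hμ, h])
        exact ⟨c, hT i c hμ hc, rfl⟩
    · rintro ⟨c, hcT, hμ⟩
      refine ⟨by simp [hμ], ?_⟩
      rw [hμ]
      intro h
      exact hcu ((Option.some.inj h) ▸ hcT)
  rw [beneCount, hset, Finset.card_biUnion hdisj]
  rfl

end OAAux

/-- If each agent is eligible for at most one preferential category and all
categories' priorities are consistent with the baseline ordering, then the outcome of the
over-and-above rule (i) complies with the eligibility requirements, (ii) is a maximum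
beneficiary assignment, (iii) respects priorities, (iv) is non-wasteful, and (v) is order
preserving for `q_{c_u^1} = q_{c_u}` and `q_{c_u^2} = 0`. -/
theorem over_and_above_properties (I : Inst N C) (cu : C) (order : List N)
    (hb : IsBaseline order) (hcuE : ∀ i : N, I.Eligible i cu)
    (hcons : Consistent I order) (hone : OneCategory I cu) :
    I.IsMatching (oaOutcome I cu order) ∧
      Complies I (oaOutcome I cu order) ∧
      MaxBene I cu (oaOutcome I cu order) ∧
      RespectsPriorities I (oaOutcome I cu order) ∧
      NonWasteful I (oaOutcome I cu order) ∧
      OrderPreservingOA I cu (oaOutcome I cu order) := by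
  -- shared facts
  have hfilter_cu : catCount (oaOutcome I cu order) cu = catCount (oaPhase1 I cu order) cu := by
    unfold catCount
    congr 1
    ext k
    simp only [Finset.mem_filter, Finset.mem_univ, true_and]
    exact outcome_eq_cu_iff I cu order k
  have hphile : catCount (oaPhase1 I cu order) cu ≤ I.quota cu := by
    rw [oaPhase1]
    exact catCount_foldl_le I cu order _ (by simp [catCount])
  have hAcF : ∀ {c : C}, c ≠ cu →
      min (I.quota c) (Finset.univ.filter fun j => I.Eligible j c).card
        ≤ (AcF I cu order c).card := by
    intro c hc
    have hbase : min (I.quota c) (Finset.univ.filter fun j => I.Eligible j c).card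
        ≤ (availF I (fun _ => none) c).card := by
      have ha : availF I (fun _ : N => (none : Option C)) c
          = Finset.univ.filter fun j => I.Eligible j c := by
        ext k
        simp [availF]
      rw [ha]
      exact min_le_right _ _
    rw [AcF, oaPhase1]
    exact avail_foldl_min I cu order (fun _ => none) hc hbase
  refine ⟨?_, ?_, ?_, ?_, ?_, ?_⟩
  -- (i) IsMatching
  · intro c
    by_cases hc : c = cu
    · rw [hc]
      show catCount (oaOutcome I cu order) cu ≤ I.quota cu
      rw [hfilter_cu]
      exact hphile
    · show catCount (oaOutcome I cu order) c ≤ I.quota c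
      rw [catCount_outcome I cu order hb hone hc]
      exact min_le_left _ _
  -- (ii) Complies
  · intro i c h
    by_cases hc : c = cu
    · rw [hc]
      exact hcuE i
    · exact ((outcome_some_iff I cu order hone hc).1 h).1
  -- (iii) MaxBene
  · intro ν hνM hνC
    set T := ((Finset.univ.image ν ∪ Finset.univ.image (oaOutcome I cu order)).erase
      (some cu)).biUnion Option.toFinset with hTdef
    have hmemT : ∀ c : C, c ∈ T ↔ c ≠ cu ∧
        ((∃ i, ν i = some c) ∨ (∃ i, oaOutcome I cu order i = some c)) := by
      intro c
      constructor
      · intro hc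
        obtain ⟨o, ho, hco⟩ := Finset.mem_biUnion.1 hc
        rw [Option.mem_toFinset] at hco
        have hoc : o = some c := hco
        subst hoc
        obtain ⟨hne, hmem⟩ := Finset.mem_erase.1 ho
        refine ⟨fun h => hne (by rw [h]), ?_⟩
        rcases Finset.mem_union.1 hmem with h | h
        · obtain ⟨i, _, hi⟩ := Finset.mem_image.1 h
          exact Or.inl ⟨i, hi⟩
        · obtain ⟨i, _, hi⟩ := Finset.mem_image.1 h
          exact Or.inr ⟨i, hi⟩
      · rintro ⟨hne, h⟩
        refine Finset.mem_biUnion.2 ⟨some c, Finset.mem_erase.2 ⟨by simpa using hne, ?_⟩,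
          by simp [Option.mem_toFinset]⟩
        rcases h with ⟨i, hi⟩ | ⟨i, hi⟩
        · exact Finset.mem_union_left _ (Finset.mem_image.2 ⟨i, Finset.mem_univ i, hi⟩)
        · exact Finset.mem_union_right _ (Finset.mem_image.2 ⟨i, Finset.mem_univ i, hi⟩)
    have hcuT : cu ∉ T := fun h => ((hmemT cu).1 h).1 rfl
    have hTν : ∀ i c, ν i = some c → c ≠ cu → c ∈ T :=
      fun i c h hc => (hmemT c).2 ⟨hc, Or.inl ⟨i, h⟩⟩
    have hTμ : ∀ i c, oaOutcome I cu order i = some c → c ≠ cu → c ∈ T :=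
      fun i c h hc => (hmemT c).2 ⟨hc, Or.inr ⟨i, h⟩⟩
    rw [beneCount_eq_sum cu ν T hcuT hTν, beneCount_eq_sum cu (oaOutcome I cu order) T hcuT hTμ]
    apply Finset.sum_le_sum
    intro c hcT
    have hc : c ≠ cu := fun h => hcuT (h ▸ hcT)
    have h1 : catCount ν c ≤ I.quota c := hνM c
    have h2 : catCount ν c ≤ (Finset.univ.filter fun j => I.Eligible j c).card := by
      apply Finset.card_le_card
      intro k hk
      simp only [Finset.mem_filter, Finset.mem_univ, true_and] at hk ⊢
      exact hνC k c hk
    rw [catCount_outcome I cu order hb hone hc]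
    exact le_min h1 ((le_min h1 h2).trans (hAcF hc))
  -- (iv) RespectsPriorities
  · rintro ⟨i, j, c, hi, hj, hs⟩
    obtain ⟨hφj, hjrest⟩ := (outcome_none_iff I cu order).1 hj
    by_cases hc : c = cu
    · rw [hc] at hi hs
      have hφi : oaPhase1 I cu order i = some cu := (outcome_eq_cu_iff I cu order i).1 hi
      have hgi : OAGuard I cu (sigAt I cu order i) i := (phase1_eq_some_iff I cu order hb i).1 hφi
      have hji : order.idxOf j < order.idxOf i := (hcons cu j i (hcuE j) (hcuE i)).1 hs
      have hngj : ¬ OAGuard I cu (sigAt I cu order j) j :=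
        (phase1_eq_none_iff I cu order hb j).1 hφj
      have hcnt : catCount (sigAt I cu order j) cu < I.quota cu :=
        lt_of_le_of_lt (sigAt_catCount_mono I cu order (le_of_lt hji)) hgi.1
      have hnB : ¬ ∀ c' : C, c' ≠ cu → I.Eligible j c' → I.quota c'
          ≤ (Finset.univ.filter fun k => k ≠ j ∧ I.Eligible k c' ∧
              sigAt I cu order j k = none).card := fun hB => hngj ⟨hcnt, hB⟩
      push_neg at hnB
      obtain ⟨c', hc', he', hlt⟩ := hnB
      have hq : I.quota c' ≤ (Finset.univ.filter fun k => I.Eligible k c' ∧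
          oaPhase1 I cu order k = none ∧ order.idxOf k < order.idxOf j).card :=
        hjrest c' hc' he'
      have hsub : (Finset.univ.filter fun k => I.Eligible k c' ∧ oaPhase1 I cu order k = none ∧
          order.idxOf k < order.idxOf j)
          ⊆ (Finset.univ.filter fun k => k ≠ j ∧ I.Eligible k c' ∧
              sigAt I cu order j k = none) := by
        intro k hk
        simp only [Finset.mem_filter, Finset.mem_univ, true_and] at hk ⊢
        obtain ⟨h1, h2, h3⟩ := hk
        refine ⟨fun hkj => by subst hkj; exact lt_irrefl _ h3, h1, ?_⟩
        rw [sigAt_frozen I cu order hb h3]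
        exact h2
      exact absurd hlt (not_lt.2 (le_trans hq (Finset.card_le_card hsub)))
    · obtain ⟨hielig, hφi, hcnti⟩ := (outcome_some_iff I cu order hone hc).1 hi
      have hjelig : I.Eligible j c := elig_of_strict I hs hielig
      have hji : order.idxOf j < order.idxOf i := (hcons c j i hjelig hielig).1 hs
      have hq : I.quota c ≤ cnt I cu order j c := hjrest c hc hjelig
      have hmono : cnt I cu order j c ≤ cnt I cu order i c := by
        apply Finset.card_le_card
        intro k hk
        simp only [Finset.mem_filter, Finset.mem_univ, true_and] at hk ⊢
        exact ⟨hk.1, hk.2.1, lt_trans hk.2.2 hji⟩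
      exact absurd hcnti (not_lt.2 (le_trans hq hmono))
  -- (v) NonWasteful
  · intro i c helig hnone
    obtain ⟨hφi, hrest⟩ := (outcome_none_iff I cu order).1 hnone
    by_cases hc : c = cu
    · rw [hc] at helig ⊢
      show catCount (oaOutcome I cu order) cu = I.quota cu
      have hngi : ¬ OAGuard I cu (sigAt I cu order i) i :=
        (phase1_eq_none_iff I cu order hb i).1 hφi
      rw [hfilter_cu]
      by_cases h1 : catCount (sigAt I cu order i) cu < I.quota cu
      · exfalso
        have hnB : ¬ ∀ c' : C, c' ≠ cu → I.Eligible i c' → I.quota c'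
            ≤ (Finset.univ.filter fun k => k ≠ i ∧ I.Eligible k c' ∧
                sigAt I cu order i k = none).card := fun hB => hngi ⟨h1, hB⟩
        push_neg at hnB
        obtain ⟨c', hc', he', hlt⟩ := hnB
        have hq : I.quota c' ≤ (Finset.univ.filter fun k => I.Eligible k c' ∧
            oaPhase1 I cu order k = none ∧ order.idxOf k < order.idxOf i).card :=
          hrest c' hc' he'
        have hsub : (Finset.univ.filter fun k => I.Eligible k c' ∧ oaPhase1 I cu order k = none ∧
            order.idxOf k < order.idxOf i)
            ⊆ (Finset.univ.filter fun k => k ≠ i ∧ I.Eligible k c' ∧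
                sigAt I cu order i k = none) := by
          intro k hk
          simp only [Finset.mem_filter, Finset.mem_univ, true_and] at hk ⊢
          obtain ⟨ha, hb', hc''⟩ := hk
          refine ⟨fun hki => by subst hki; exact lt_irrefl _ hc'', ha, ?_⟩
          rw [sigAt_frozen I cu order hb hc'']
          exact hb'
        exact absurd hlt (not_lt.2 (le_trans hq (Finset.card_le_card hsub)))
      · push_neg at h1
        exact le_antisymm hphile (le_trans h1 (phase1_catCount_ge I cu order i))
    · have hq : I.quota c ≤ cnt I cu order i c := hrest c hc helig
      rw [cnt_eq_Ac I cu order i c] at hq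
      have hA : I.quota c ≤ (AcF I cu order c).card :=
        le_trans hq (Finset.card_le_card (Finset.filter_subset _ _))
      show catCount (oaOutcome I cu order) c = I.quota c
      rw [catCount_outcome I cu order hb hone hc]
      exact min_eq_left hA
  -- (vi) OrderPreservingOA
  · intro i j ci cj hi hj hci hs hjelig hcj
    rw [hcj] at hj hs
    have hφj : oaPhase1 I cu order j = some cu := (outcome_eq_cu_iff I cu order j).1 hj
    have hgj : OAGuard I cu (sigAt I cu order j) j := (phase1_eq_some_iff I cu order hb j).1 hφj
    obtain ⟨hielig, hφi, hcnti⟩ := (outcome_some_iff I cu order hone hci).1 hi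
    have hij : order.idxOf i < order.idxOf j := (hcons cu i j (hcuE i) (hcuE j)).1 hs
    have hngi : ¬ OAGuard I cu (sigAt I cu order i) i :=
      (phase1_eq_none_iff I cu order hb i).1 hφi
    have h1 : catCount (sigAt I cu order i) cu < I.quota cu :=
      lt_of_le_of_lt (sigAt_catCount_mono I cu order (le_of_lt hij)) hgj.1
    have hnB : ¬ ∀ c' : C, c' ≠ cu → I.Eligible i c' → I.quota c'
        ≤ (Finset.univ.filter fun k => k ≠ i ∧ I.Eligible k c' ∧
            sigAt I cu order i k = none).card := fun hB => hngi ⟨h1, hB⟩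
    push_neg at hnB
    obtain ⟨c', hc', he', hlt⟩ := hnB
    have hc'ci : c' = ci := hone i c' ci hc' hci he' hielig
    rw [hc'ci] at hlt
    have hB : I.quota ci ≤ (Finset.univ.filter fun k => k ≠ j ∧ I.Eligible k ci ∧
        sigAt I cu order j k = none).card := hgj.2 ci hci hjelig
    set Ui := Finset.univ.filter (fun k => I.Eligible k ci ∧ sigAt I cu order i k = none)
      with hUi
    set Uj := Finset.univ.filter (fun k => I.Eligible k ci ∧ sigAt I cu order j k = none)
      with hUj
    have hUsub : Uj ⊆ Ui := by
      intro k hk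
      simp only [hUi, hUj, Finset.mem_filter, Finset.mem_univ, true_and] at hk ⊢
      exact ⟨hk.1, sigAt_none_mono I cu order (le_of_lt hij) hk.2⟩
    have hAset : (Finset.univ.filter fun k => k ≠ i ∧ I.Eligible k ci ∧
        sigAt I cu order i k = none) = Ui.erase i := by
      ext k
      simp only [hUi, Finset.mem_filter, Finset.mem_univ, true_and, Finset.mem_erase]
    have hBset : (Finset.univ.filter fun k => k ≠ j ∧ I.Eligible k ci ∧
        sigAt I cu order j k = none) = Uj.erase j := by
      ext k
      simp only [hUj, Finset.mem_filter, Finset.mem_univ, true_and, Finset.mem_erase]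
    have hiUi : i ∈ Ui := by
      simp only [hUi, Finset.mem_filter, Finset.mem_univ, true_and]
      exact ⟨hielig, sigAt_self I cu order hb i⟩
    have hjUj : j ∈ Uj := by
      simp only [hUj, Finset.mem_filter, Finset.mem_univ, true_and]
      exact ⟨hjelig, sigAt_self I cu order hb j⟩
    rw [hBset, Finset.card_erase_of_mem hjUj] at hB
    rw [hAset, Finset.card_erase_of_mem hiUi] at hlt
    have hcards := Finset.card_le_card hUsub
    have hj1 : 1 ≤ Uj.card := Finset.card_pos.2 ⟨j, hjUj⟩
    omega
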